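/- arXiv:1902.06478 — 2 statements merged into one kernel-verified Lean document; each statement's English description precedes it below -/
import Mathlib

section
/- With $z_i(t) = \sum_{k=0}^{i} \gamma^k q^{k^2} \begin{bmatrix} i \\ k \end{bmatrix}_{q^2} \prod_{s=1}^{i} \frac{tq^{2(s-k)}-1}{q^{2s}-1}$, the leading coefficient of $z_i$ in $t$ equals $\prod_{s=0}^{i-1} q^{2s+1}(\gamma + q^{2s+1}) / \prod_{s=0}^{i-1}(q^{2i} - q^{2s})$; consequently, for distinct integers $0 = a_0 < \cdots < a_i$, $\sum_{k=0}^{i} \frac{\prod_{s=0}^{i-1}(q^{2a_i}-q^{2a_s})}{\prod_{s=0,s\neq k}^{i}(q^{2a_k}-q^{2a_s})} z_i(q^{2a_k}) = \prod_{s=0}^{i-1} q^{2s+1}(\gamma + q^{2s+1}) \frac{q^{2a_i}-q^{2a_s}}{q^{2i}-q^{2s}}$. -/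
/-- The `q²`-binomial coefficient `[j; k]_{q²}`. -/
noncomputable def qBinom (q : ℝ) (j k : ℕ) : ℝ :=
  (∏ s ∈ Finset.Icc 1 j, (q ^ (2 * s) - 1)) /
    ((∏ s ∈ Finset.Icc 1 k, (q ^ (2 * s) - 1)) * ∏ s ∈ Finset.Icc 1 (j - k), (q ^ (2 * s) - 1))

/-- The polynomial `z_j(t) = ∑_{k=0}^j γ^k q^{k²} [j;k]_{q²} ∏_{s=1}^j (t q^{2(s-k)}-1)/(q^{2s}-1)`. -/
noncomputable def zFun (γ q : ℝ) (j : ℕ) (t : ℝ) : ℝ :=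
  ∑ k ∈ Finset.range (j + 1),
    γ ^ k * q ^ (k ^ 2) * qBinom q j k *
      ∏ s ∈ Finset.Icc 1 j, (t * q ^ (2 * s) / q ^ (2 * k) - 1) / (q ^ (2 * s) - 1)

/-! ### Auxiliary material -/

/-- The truncated `q²`-binomial coefficient: zero for `k > i`. -/
noncomputable def qB (q : ℝ) (i k : ℕ) : ℝ := if k ≤ i then qBinom q i k else 0

/-- The polynomial realization of `zFun`. -/
noncomputable def zPoly (γ q : ℝ) (i : ℕ) : Polynomial ℝ :=
  ∑ k ∈ Finset.range (i + 1),
    Polynomial.C (γ ^ k * q ^ (k ^ 2) * qBinom q i k) *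
      ∏ s ∈ Finset.Icc 1 i,
        (Polynomial.C (q ^ (2 * s) / q ^ (2 * k) / (q ^ (2 * s) - 1)) * Polynomial.X
          + Polynomial.C (-(1 / (q ^ (2 * s) - 1))))

lemma zPoly_eval (γ q : ℝ) (i : ℕ) (t : ℝ) : (zPoly γ q i).eval t = zFun γ q i t := by
  unfold zPoly zFun
  rw [Polynomial.eval_finset_sum]
  refine Finset.sum_congr rfl fun k _ => ?_
  rw [Polynomial.eval_mul, Polynomial.eval_C, Polynomial.eval_prod]
  congr 1
  refine Finset.prod_congr rfl fun s _ => ?_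
  rw [Polynomial.eval_add, Polynomial.eval_mul, Polynomial.eval_C, Polynomial.eval_X,
    Polynomial.eval_C]
  ring

section Sums

lemma sum_odd_sq (i : ℕ) : ∑ s ∈ Finset.range i, (2 * s + 1) = i ^ 2 := by
  induction i with
  | zero => simp
  | succ n ih => rw [Finset.sum_range_succ, ih]; ring

lemma sum_two_range (i : ℕ) : ∑ s ∈ Finset.range i, 2 * s = i * (i - 1) := by
  induction i with
  | zero => simp
  | succ n ih =>
    rw [Finset.sum_range_succ, ih]
    rcases n with _ | m
    · simp
    · simp only [Nat.succ_sub_one]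
      ring

lemma sum_two_Icc (i : ℕ) : ∑ s ∈ Finset.Icc 1 i, 2 * s = i * (i + 1) := by
  induction i with
  | zero => simp
  | succ n ih => rw [Finset.sum_Icc_succ_top (by omega), ih]; ring

lemma qfacD_range (q : ℝ) (i : ℕ) :
    ∏ s ∈ Finset.range i, (q ^ (2 * (s + 1)) - 1) = ∏ s ∈ Finset.Icc 1 i, (q ^ (2 * s) - 1) := by
  induction i with
  | zero => simp
  | succ n ih => rw [Finset.prod_range_succ, ih, Finset.prod_Icc_succ_top (by omega)]

end Sums

section Aux
variable {q : ℝ} (hq0 : 0 < q) (hq1 : q ≠ 1)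

include hq0 hq1 in
lemma pow_inj' : ∀ {m n : ℕ}, q ^ m = q ^ n → m = n := by
  intro m n h
  have hlog : Real.log q ≠ 0 := by
    intro h0
    rcases (Real.log_eq_zero).1 h0 with h | h | h
    · linarith
    · exact hq1 h
    · linarith
  have := congrArg Real.log h
  rw [Real.log_pow, Real.log_pow] at this
  exact_mod_cast mul_right_cancel₀ hlog this

include hq0 hq1 in
lemma qfac_ne (n : ℕ) : (∏ s ∈ Finset.Icc 1 n, (q ^ (2 * s) - 1)) ≠ 0 := by
  rw [Finset.prod_ne_zero_iff]
  intro s hs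
  rw [Finset.mem_Icc] at hs
  intro h
  have : q ^ (2 * s) = q ^ 0 := by rw [pow_zero]; linarith
  have := pow_inj' hq0 hq1 this
  omega

include hq0 hq1 in
lemma qpow_ne_qpow {m n : ℕ} (h : m ≠ n) : q ^ m - q ^ n ≠ 0 := by
  intro h0
  exact h (pow_inj' hq0 hq1 (by linarith))

lemma qfac_succ (n : ℕ) : (∏ s ∈ Finset.Icc 1 (n + 1), (q ^ (2 * s) - 1)) =
    (∏ s ∈ Finset.Icc 1 n, (q ^ (2 * s) - 1)) * (q ^ (2 * (n + 1)) - 1) :=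
  Finset.prod_Icc_succ_top (by omega) _

include hq0 hq1 in
lemma qB_zero (i : ℕ) : qB q i 0 = 1 := by
  simp only [qB, if_pos (Nat.zero_le i), qBinom, Nat.sub_zero]
  rw [show Finset.Icc 1 0 = (∅ : Finset ℕ) from rfl, Finset.prod_empty, one_mul]
  exact div_self (qfac_ne hq0 hq1 i)

include hq0 hq1 in
lemma qB_self (i : ℕ) : qB q i i = 1 := by
  simp only [qB, le_refl, if_pos, qBinom, Nat.sub_self]
  rw [show Finset.Icc 1 0 = (∅ : Finset ℕ) from rfl, Finset.prod_empty, mul_one]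
  exact div_self (qfac_ne hq0 hq1 i)

lemma qB_symm {i k : ℕ} (hk : k ≤ i) : qB q i (i - k) = qB q i k := by
  simp only [qB, if_pos hk, if_pos (Nat.sub_le i k), qBinom]
  rw [Nat.sub_sub_self hk, mul_comm]

include hq0 hq1 in
lemma qB_pascal {n k : ℕ} (hk : k ≤ n) :
    qB q (n + 1) (k + 1) = qB q n (k + 1) + q ^ (2 * (n - k)) * qB q n k := by
  rcases eq_or_lt_of_le hk with rfl | hlt
  · rw [Nat.sub_self, qB_self hq0 hq1, qB_self hq0 hq1,
      show qB q k (k + 1) = 0 from if_neg (by omega)]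
    norm_num
  have hk1 : k + 1 ≤ n := hlt
  simp only [qB, if_pos (by omega : k + 1 ≤ n + 1), if_pos hk1, if_pos hk, qBinom]
  have e1 : n + 1 - (k + 1) = n - k := by omega
  have e2 : n - k = (n - (k + 1)) + 1 := by omega
  rw [e1, qfac_succ, qfac_succ (n := k)]
  rw [show (∏ s ∈ Finset.Icc 1 (n - k), (q ^ (2 * s) - 1)) =
      (∏ s ∈ Finset.Icc 1 (n - (k + 1)), (q ^ (2 * s) - 1)) * (q ^ (2 * (n - k)) - 1) by
    conv_lhs => rw [e2, qfac_succ]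
    rw [← e2]]
  have A := qfac_ne hq0 hq1 n
  have B := qfac_ne hq0 hq1 k
  have C := qfac_ne hq0 hq1 (n - (k + 1))
  have D : (q ^ (2 * (k + 1)) - 1) ≠ 0 := by
    have := qpow_ne_qpow hq0 hq1 (show 2 * (k + 1) ≠ 0 by omega) (n := 0)
    simpa using this
  have E : (q ^ (2 * (n - k)) - 1) ≠ 0 := by
    have := qpow_ne_qpow hq0 hq1 (show 2 * (n - k) ≠ 0 by omega) (n := 0)
    simpa using this
  have key : q ^ (2 * (n + 1)) = q ^ (2 * (n - k)) * q ^ (2 * (k + 1)) := by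
    rw [← pow_add]; congr 1; omega
  field_simp
  rw [key]; ring

include hq0 hq1 in
lemma qbinom_thm (γ : ℝ) (i : ℕ) :
    ∑ k ∈ Finset.range (i + 1), q ^ (k ^ 2) * qB q i k * γ ^ (i - k) =
      ∏ s ∈ Finset.range i, (γ + q ^ (2 * s + 1)) := by
  induction i with
  | zero => simp [qB_zero hq0 hq1]
  | succ n ih =>
    have step : ∀ k ∈ Finset.range (n + 1),
        q ^ ((k + 1) ^ 2) * qB q (n + 1) (k + 1) * γ ^ (n + 1 - (k + 1)) =
        q ^ ((k + 1) ^ 2) * qB q n (k + 1) * γ ^ (n - k)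
          + q ^ (2 * n + 1) * (q ^ (k ^ 2) * qB q n k * γ ^ (n - k)) := by
      intro k hk
      rw [Finset.mem_range] at hk
      rw [qB_pascal hq0 hq1 (by omega), show n + 1 - (k + 1) = n - k from by omega]
      have hpow : q ^ ((k + 1) ^ 2) * q ^ (2 * (n - k)) = q ^ (2 * n + 1) * q ^ (k ^ 2) := by
        rw [← pow_add, ← pow_add]; congr 1
        have hk' : k ≤ n := by omega
        zify [hk']; ring
      calc q ^ ((k + 1) ^ 2) * (qB q n (k + 1) + q ^ (2 * (n - k)) * qB q n k) * γ ^ (n - k)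
          = q ^ ((k + 1) ^ 2) * qB q n (k + 1) * γ ^ (n - k)
            + (q ^ ((k + 1) ^ 2) * q ^ (2 * (n - k))) * qB q n k * γ ^ (n - k) := by ring
        _ = _ := by rw [hpow]; ring
    have htop : qB q n (n + 1) = 0 := if_neg (by omega)
    have lhs_eq : ∑ k ∈ Finset.range (n + 1), q ^ ((k + 1) ^ 2) * qB q n (k + 1) * γ ^ (n - k)
        = ∑ k ∈ Finset.range n, q ^ ((k + 1) ^ 2) * qB q n (k + 1) * γ ^ (n - k) := by
      rw [Finset.sum_range_succ, htop]; ring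
    have rhs_eq : γ * ∑ k ∈ Finset.range (n + 1), q ^ (k ^ 2) * qB q n k * γ ^ (n - k)
        = ∑ k ∈ Finset.range n, q ^ ((k + 1) ^ 2) * qB q n (k + 1) * γ ^ (n - k) + γ ^ (n + 1) := by
      rw [Finset.mul_sum, Finset.sum_range_succ']
      congr 1
      · refine Finset.sum_congr rfl fun k hk => ?_
        rw [Finset.mem_range] at hk
        rw [show n - k = n - (k + 1) + 1 from by omega]
        ring
      · rw [qB_zero hq0 hq1, Nat.sub_zero, pow_succ]
        ring
    rw [Finset.prod_range_succ, ← ih, Finset.sum_range_succ',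
      Finset.sum_congr rfl step, Finset.sum_add_distrib, ← Finset.mul_sum,
      qB_zero hq0 hq1, lhs_eq]
    rw [Nat.sub_zero]
    linear_combination -rhs_eq

set_option linter.constructorNameAsVariable false in
include hq0 hq1 in
lemma zPoly_coeff (γ : ℝ) (i : ℕ) :
    (zPoly γ q i).coeff i =
      (∏ s ∈ Finset.range i, q ^ (2 * s + 1) * (γ + q ^ (2 * s + 1))) /
        ∏ s ∈ Finset.range i, (q ^ (2 * i) - q ^ (2 * s)) := by
  have hqne : q ≠ 0 := ne_of_gt hq0
  have hDne := qfac_ne hq0 hq1 (n := i)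
  have hfac : ∀ s : ℕ, 1 ≤ s → (q ^ (2 * s) - 1) ≠ 0 := by
    intro s hs
    have := qpow_ne_qpow hq0 hq1 (m := 2 * s) (n := 0) (by omega)
    simpa using this
  have hane : ∀ k : ℕ, ∀ s ∈ Finset.Icc 1 i,
      (q ^ (2 * s) / q ^ (2 * k) / (q ^ (2 * s) - 1)) ≠ 0 := by
    intro k s hs
    rw [Finset.mem_Icc] at hs
    exact div_ne_zero (div_ne_zero (pow_ne_zero _ hqne) (pow_ne_zero _ hqne)) (hfac s hs.1)
  have hcoeff : ∀ k, (Polynomial.C (γ ^ k * q ^ (k ^ 2) * qBinom q i k) *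
      ∏ s ∈ Finset.Icc 1 i,
        (Polynomial.C (q ^ (2 * s) / q ^ (2 * k) / (q ^ (2 * s) - 1)) * Polynomial.X
          + Polynomial.C (-(1 / (q ^ (2 * s) - 1))))).coeff i
      = γ ^ k * q ^ (k ^ 2) * qBinom q i k *
        ∏ s ∈ Finset.Icc 1 i, (q ^ (2 * s) / q ^ (2 * k) / (q ^ (2 * s) - 1)) := by
    intro k
    rw [Polynomial.coeff_C_mul]
    congr 1
    have hne : ∀ s ∈ Finset.Icc 1 i,
        (Polynomial.C (q ^ (2 * s) / q ^ (2 * k) / (q ^ (2 * s) - 1)) * Polynomial.X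
          + Polynomial.C (-(1 / (q ^ (2 * s) - 1)))) ≠ 0 := by
      intro s hs h
      have := Polynomial.natDegree_linear (hane k s hs)
        (b := -(1 / (q ^ (2 * s) - 1)))
      rw [h] at this
      simp at this
    set P : Polynomial ℝ := ∏ s ∈ Finset.Icc 1 i,
        (Polynomial.C (q ^ (2 * s) / q ^ (2 * k) / (q ^ (2 * s) - 1)) * Polynomial.X
          + Polynomial.C (-(1 / (q ^ (2 * s) - 1)))) with hP
    have hdeg : P.natDegree = i := by
      rw [hP, Polynomial.natDegree_prod _ _ hne,
        Finset.sum_congr rfl (fun s hs => Polynomial.natDegree_linear (hane k s hs))]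
      simp [Nat.card_Icc]
    conv_lhs => rw [← hdeg]
    rw [Polynomial.coeff_natDegree, hP, Polynomial.leadingCoeff_prod]
    exact Finset.prod_congr rfl fun s hs => Polynomial.leadingCoeff_linear (hane k s hs)
  unfold zPoly
  rw [Polynomial.finset_sum_coeff, Finset.sum_congr rfl (fun k _ => hcoeff k)]
  have hprod : ∀ k : ℕ, ∏ s ∈ Finset.Icc 1 i, (q ^ (2 * s) / q ^ (2 * k) / (q ^ (2 * s) - 1))
      = q ^ (i * (i + 1)) / q ^ (2 * k * i) / ∏ s ∈ Finset.Icc 1 i, (q ^ (2 * s) - 1) := by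
    intro k
    rw [Finset.prod_div_distrib, Finset.prod_div_distrib, Finset.prod_const,
      Finset.prod_pow_eq_pow_sum, sum_two_Icc, Nat.card_Icc, ← pow_mul]
    norm_num
  have hterm : ∀ k ∈ Finset.range (i + 1),
      γ ^ k * q ^ (k ^ 2) * qBinom q i k *
          ∏ s ∈ Finset.Icc 1 i, (q ^ (2 * s) / q ^ (2 * k) / (q ^ (2 * s) - 1))
      = q ^ ((i - k) ^ 2) * qB q i k * γ ^ k * q ^ i /
          ∏ s ∈ Finset.Icc 1 i, (q ^ (2 * s) - 1) := by
    intro k hk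
    rw [Finset.mem_range] at hk
    have hk' : k ≤ i := by omega
    rw [hprod k, show qBinom q i k = qB q i k from (if_pos hk').symm]
    have hpw : q ^ (k ^ 2) * q ^ (i * (i + 1)) = q ^ ((i - k) ^ 2) * q ^ i * q ^ (2 * k * i) := by
      rw [← pow_add, ← pow_add, ← pow_add]
      congr 1
      zify [hk']
      ring
    field_simp
    linear_combination (qB q i k * γ ^ k) * hpw
  rw [Finset.sum_congr rfl hterm, ← Finset.sum_div, ← Finset.sum_mul]
  have refl : ∑ k ∈ Finset.range (i + 1), q ^ ((i - k) ^ 2) * qB q i k * γ ^ k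
      = ∏ s ∈ Finset.range i, (γ + q ^ (2 * s + 1)) := by
    rw [← qbinom_thm hq0 hq1 γ i,
      ← Finset.sum_range_reflect (fun j => q ^ (j ^ 2) * qB q i j * γ ^ (i - j)) (i + 1)]
    refine Finset.sum_congr rfl fun k hk => ?_
    rw [Finset.mem_range] at hk
    have hk' : k ≤ i := by omega
    rw [show i + 1 - 1 - k = i - k from by omega, qB_symm hk',
      show i - (i - k) = k from by omega]
  rw [refl]
  rw [Finset.prod_mul_distrib]
  have h1 : ∏ s ∈ Finset.range i, q ^ (2 * s + 1) = q ^ (i ^ 2) := by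
    rw [Finset.prod_pow_eq_pow_sum, sum_odd_sq]
  have h2 : ∏ s ∈ Finset.range i, (q ^ (2 * i) - q ^ (2 * s))
      = q ^ (i * (i - 1)) * ∏ s ∈ Finset.Icc 1 i, (q ^ (2 * s) - 1) := by
    have e : ∀ s ∈ Finset.range i, q ^ (2 * i) - q ^ (2 * s)
        = q ^ (2 * s) * (q ^ (2 * (i - s)) - 1) := by
      intro s hs
      rw [Finset.mem_range] at hs
      rw [mul_sub, mul_one, ← pow_add]
      congr 2
      omega
    rw [Finset.prod_congr rfl e, Finset.prod_mul_distrib, Finset.prod_pow_eq_pow_sum,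
      sum_two_range]
    congr 1
    rw [← qfacD_range q i, ← Finset.prod_range_reflect (fun j => q ^ (2 * (j + 1)) - 1) i]
    refine Finset.prod_congr rfl fun s hs => ?_
    rw [Finset.mem_range] at hs
    congr 2
    omega
  rw [h1, h2]
  have hsq : q ^ (i ^ 2) = q ^ i * q ^ (i * (i - 1)) := by
    rw [← pow_add]
    congr 1
    rcases i with _ | m
    · simp
    · simp only [Nat.succ_sub_one]
      ring
  rw [hsq, div_eq_div_iff hDne (mul_ne_zero (pow_ne_zero _ hqne) hDne)]
  ring

include hq0 hq1 in
lemma basis_coeff (i : ℕ) (a : ℕ → ℕ) (hmono : StrictMono a) (k : ℕ)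
    (hk : k ∈ Finset.range (i + 1)) :
    (Lagrange.basis (Finset.range (i + 1)) (fun n => q ^ (2 * a n)) k).coeff i =
      (∏ j ∈ (Finset.range (i + 1)).erase k, (q ^ (2 * a k) - q ^ (2 * a j)))⁻¹ := by
  have hinj : Set.InjOn (fun n : ℕ => q ^ (2 * a n)) (Finset.range (i + 1)) := by
    intro x _ y _ h
    have := pow_inj' hq0 hq1 h
    exact hmono.injective (by omega)
  have hnd := Lagrange.natDegree_basis hinj hk
  rw [Finset.card_range] at hnd
  simp only [Nat.add_sub_cancel] at hnd
  set B := Lagrange.basis (Finset.range (i + 1)) (fun n => q ^ (2 * a n)) k with hB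
  conv_lhs => rw [← hnd]
  rw [Polynomial.coeff_natDegree, hB, Lagrange.basis, Polynomial.leadingCoeff_prod,
    ← Finset.prod_inv_distrib]
  refine Finset.prod_congr rfl fun j hj => ?_
  rw [Lagrange.basisDivisor, Polynomial.leadingCoeff_mul, Polynomial.leadingCoeff_C,
    (Polynomial.monic_X_sub_C _).leadingCoeff, mul_one]

end Aux

/-- The leading coefficient in `t` of the degree-`i` polynomial `z_i(t)` equals
`∏_{s=0}^{i-1} q^{2s+1}(γ+q^{2s+1}) / ∏_{s=0}^{i-1}(q^{2i}-q^{2s})`; consequently, for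
integers `0 = a_0 < a_1 < ⋯ < a_i`, the divided-difference sum
`∑_{k=0}^i (∏_{s=0}^{i-1}(q^{2a_i}-q^{2a_s}) / ∏_{s≠k}(q^{2a_k}-q^{2a_s})) z_i(q^{2a_k})`
equals `∏_{s=0}^{i-1} q^{2s+1}(γ+q^{2s+1})(q^{2a_i}-q^{2a_s})/(q^{2i}-q^{2s})`. -/
theorem zFun_leading_coefficient_and_diagonal (γ q : ℝ) (hq0 : 0 < q) (hq1 : q ≠ 1)
    (i : ℕ) (a : ℕ → ℕ) (ha0 : a 0 = 0) (hmono : StrictMono a) :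
    (∃ P : Polynomial ℝ, (∀ t : ℝ, P.eval t = zFun γ q i t) ∧
        P.coeff i =
          (∏ s ∈ Finset.range i, q ^ (2 * s + 1) * (γ + q ^ (2 * s + 1))) /
            ∏ s ∈ Finset.range i, (q ^ (2 * i) - q ^ (2 * s))) ∧
      ∑ k ∈ Finset.range (i + 1),
          (∏ s ∈ Finset.range i, (q ^ (2 * a i) - q ^ (2 * a s))) /
              (∏ s ∈ (Finset.range (i + 1)).erase k, (q ^ (2 * a k) - q ^ (2 * a s))) *
            zFun γ q i (q ^ (2 * a k)) =
        ∏ s ∈ Finset.range i,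
          q ^ (2 * s + 1) * (γ + q ^ (2 * s + 1)) *
            ((q ^ (2 * a i) - q ^ (2 * a s)) / (q ^ (2 * i) - q ^ (2 * s))) := by
  have hqne : q ≠ 0 := ne_of_gt hq0
  constructor
  · exact ⟨zPoly γ q i, fun t => zPoly_eval γ q i t, zPoly_coeff hq0 hq1 γ i⟩
  have hinj : Set.InjOn (fun n : ℕ => q ^ (2 * a n)) (Finset.range (i + 1)) := by
    intro x _ y _ h
    have := pow_inj' hq0 hq1 h
    exact hmono.injective (by omega)
  -- degree bound
  have hfac : ∀ s : ℕ, 1 ≤ s → (q ^ (2 * s) - 1) ≠ 0 := by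
    intro s hs
    have := qpow_ne_qpow hq0 hq1 (m := 2 * s) (n := 0) (by omega)
    simpa using this
  have hdegle : (zPoly γ q i).degree ≤ (i : WithBot ℕ) := by
    unfold zPoly
    refine (Polynomial.degree_sum_le _ _).trans ?_
    rw [Finset.sup_le_iff]
    intro k _
    refine (Polynomial.degree_mul_le _ _).trans ?_
    have hdp : (∏ s ∈ Finset.Icc 1 i,
        (Polynomial.C (q ^ (2 * s) / q ^ (2 * k) / (q ^ (2 * s) - 1)) * Polynomial.X
          + Polynomial.C (-(1 / (q ^ (2 * s) - 1))))).degree ≤ (i : WithBot ℕ) := by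
      refine (Polynomial.degree_prod_le _ _).trans ?_
      have hb : ∀ s ∈ Finset.Icc 1 i,
          (Polynomial.C (q ^ (2 * s) / q ^ (2 * k) / (q ^ (2 * s) - 1)) * Polynomial.X
            + Polynomial.C (-(1 / (q ^ (2 * s) - 1)))).degree ≤ (1 : WithBot ℕ) :=
        fun s _ => Polynomial.degree_linear_le
      refine (Finset.sum_le_sum hb).trans ?_
      rw [Finset.sum_const, Nat.card_Icc]
      simp [Nat.add_sub_cancel]
    calc (Polynomial.C (γ ^ k * q ^ (k ^ 2) * qBinom q i k)).degree + _ ≤ 0 + (i : WithBot ℕ) :=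
          add_le_add Polynomial.degree_C_le hdp
      _ = (i : WithBot ℕ) := zero_add _
  have hdeglt : (zPoly γ q i).degree < ((Finset.range (i + 1)).card : WithBot ℕ) := by
    rw [Finset.card_range]
    refine lt_of_le_of_lt hdegle ?_
    exact_mod_cast Nat.lt_succ_self i
  have hinterp := Lagrange.eq_interpolate (v := fun n : ℕ => q ^ (2 * a n)) hinj hdeglt
  have hco : (zPoly γ q i).coeff i = ∑ k ∈ Finset.range (i + 1),
      zFun γ q i (q ^ (2 * a k)) *
        (∏ j ∈ (Finset.range (i + 1)).erase k, (q ^ (2 * a k) - q ^ (2 * a j)))⁻¹ := by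
    conv_lhs => rw [hinterp]
    rw [Lagrange.interpolate_apply, Polynomial.finset_sum_coeff]
    refine Finset.sum_congr rfl fun k hk => ?_
    rw [Polynomial.coeff_C_mul, basis_coeff hq0 hq1 i a hmono k hk]
    congr 1
    exact zPoly_eval γ q i _
  calc ∑ k ∈ Finset.range (i + 1),
        (∏ s ∈ Finset.range i, (q ^ (2 * a i) - q ^ (2 * a s))) /
            (∏ s ∈ (Finset.range (i + 1)).erase k, (q ^ (2 * a k) - q ^ (2 * a s))) *
          zFun γ q i (q ^ (2 * a k))
      = (∏ s ∈ Finset.range i, (q ^ (2 * a i) - q ^ (2 * a s))) *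
          ∑ k ∈ Finset.range (i + 1), zFun γ q i (q ^ (2 * a k)) *
            (∏ j ∈ (Finset.range (i + 1)).erase k, (q ^ (2 * a k) - q ^ (2 * a j)))⁻¹ := by
        rw [Finset.mul_sum]
        refine Finset.sum_congr rfl fun k _ => ?_
        rw [div_eq_mul_inv]
        ring
    _ = (∏ s ∈ Finset.range i, (q ^ (2 * a i) - q ^ (2 * a s))) *
          ((∏ s ∈ Finset.range i, q ^ (2 * s + 1) * (γ + q ^ (2 * s + 1))) /
            ∏ s ∈ Finset.range i, (q ^ (2 * i) - q ^ (2 * s))) := by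
        rw [← hco, zPoly_coeff hq0 hq1 γ i]
    _ = ∏ s ∈ Finset.range i,
          q ^ (2 * s + 1) * (γ + q ^ (2 * s + 1)) *
            ((q ^ (2 * a i) - q ^ (2 * a s)) / (q ^ (2 * i) - q ^ (2 * s))) := by
        rw [Finset.prod_congr rfl (fun s _ => (mul_div_assoc
          (q ^ (2 * s + 1) * (γ + q ^ (2 * s + 1))) (q ^ (2 * a i) - q ^ (2 * a s))
          (q ^ (2 * i) - q ^ (2 * s))).symm),
          Finset.prod_div_distrib, Finset.prod_mul_distrib, Finset.prod_mul_distrib,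
          Finset.prod_mul_distrib]
        ring
end

section
/- With $G_\gamma$ the geodesic polynomial as defined, one has the identity $G_{\gamma^{-1}}(X^{-1}, Y; U^{-1}, V) = \frac{1}{U^2 X^2 \gamma} G_\gamma(X,Y;U,V)$ as rational functions (valid for $U, X, \gamma \neq 0$). -/
/-- The geodesic polynomial `G_γ(X,Y;U,V)` whose zero set is the algebraic equation of
geodesics for scaled weighted Schröder paths. -/
def geoG (γ X Y U V : ℝ) : ℝ :=
  (U - 1) * (V - 1) * (γ * (U * V + X ^ 2 * Y ^ 2) - (V * X ^ 2 + U * Y ^ 2)) -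
    X * Y * ((U + 1) * (V + 1) * (1 + U * V + γ * (U + V)) - 8 * (1 + γ) * U * V) +
    (V - 1) * (X ^ 2 + U) * Y * (U * V - 1 + γ * (V - U)) +
    (U - 1) * (Y ^ 2 + V) * X * (U * V - 1 + γ * (U - V))

/-- The "unphysical" left-right symmetry of the geodesic polynomial:
`G_{γ⁻¹}(X⁻¹, Y; U⁻¹, V) = G_γ(X,Y;U,V) / (U²X²γ)` for `U, X, γ ≠ 0`. -/
theorem geoG_leftright_symmetry (γ X Y U V : ℝ) (hγ : γ ≠ 0) (hU : U ≠ 0) (hX : X ≠ 0) :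
    geoG γ⁻¹ X⁻¹ Y U⁻¹ V = geoG γ X Y U V / (U ^ 2 * X ^ 2 * γ) := by
  unfold geoG
  field_simp [geoG]
  ring
end
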